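/- arXiv:math/0310045 — 2 statements merged into one kernel-verified Lean document; each statement's English description precedes it below -/
import Mathlib

section
/- Let k be a field, p ∈ k a nonzero element, and let T = k⟨x, y, z⟩/(yx − pxy, xz − zx, zy − yz). Set α = x² + x(1+p)z + pz² and β = x(z+y) + z(z+py). Then in T: (y+z)·α = (x+z)·(x(p²y + z) + pz(y+z)) and (y+z)·β = (x+z)·(y+z)·(py+z). -/
/-- In the algebra `T = k⟨x,y,z⟩/(yx − pxy, xz − zx, zy − yz)` (formalized as any
`k`-algebra with elements `x, y, z` satisfying these relations), setting
`α = x² + x(1+p)z + pz²` and `β = x(z+y) + z(z+py)`, one has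
`(y+z)·α = (x+z)·(x(p²y + z) + pz(y+z))` and
`(y+z)·β = (x+z)·(y+z)·(py+z)`. -/
theorem quantum_plane_identities {k : Type*} [Field k] (p : k) (hp : p ≠ 0)
    {T : Type*} [Ring T] [Algebra k T] (x y z : T)
    (hyx : y * x = p • (x * y)) (hxz : x * z = z * x) (hzy : z * y = y * z) :
    (y + z) * (x ^ 2 + (1 + p) • (x * z) + p • z ^ 2) =
        (x + z) * (x * (p ^ 2 • y + z) + p • (z * (y + z))) ∧
      (y + z) * (x * (z + y) + z * (z + p • y)) =
        (x + z) * ((y + z) * (p • y + z)) := by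
  have h1 : ∀ t : T, y * (x * t) = p • (x * (y * t)) := fun t => by
    rw [← mul_assoc, hyx, smul_mul_assoc, mul_assoc]
  have h2 : ∀ t : T, z * (x * t) = x * (z * t) := fun t => by
    rw [← mul_assoc, ← hxz, mul_assoc]
  have h3 : ∀ t : T, z * (y * t) = y * (z * t) := fun t => by
    rw [← mul_assoc, hzy, mul_assoc]
  constructor <;>
  · simp only [pow_two, mul_add, add_mul, smul_add, mul_smul_comm, smul_mul_assoc,
      mul_assoc, hyx, h1, hzy, h3, ← hxz, h2, smul_smul, add_smul, one_smul]
    module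
end

section
/- Let A = ∪_{i≥0} Λᵢ be a filtered k-algebra (Λᵢ ⊆ Λ_{i+1}, ΛᵢΛⱼ ⊆ Λ_{i+j}) such that A and gr A = ⊕ᵢΛᵢ/Λ_{i−1} are both Ore domains. Let M = ∪Θᵢ be a filtered right ideal of A (Θᵢ = Θᵢ ∩ M, ΘᵢΛⱼ ⊆ Θ_{i+j}) such that either each Θᵢ is finite-dimensional over k or gr_Θ M is a finitely generated gr A-module. Assume there is r₀ ∈ ℕ such that (gr_Θ M)_{≥ r₀} is a torsion-free right gr(A)-module. Then there exists an integer j such that Θᵢ = Λ_{i+j} ∩ M for all sufficiently large i. -/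
/-- `lowerFil Λ n` is `Λ (n-1)`, with the convention `Λ (-1) = ⊥`. -/
def lowerFil {σ : Type*} [Bot σ] (Λ : ℕ → σ) : ℕ → σ
  | 0 => ⊥
  | n + 1 => Λ n

lemma zero_mem_lowerFil {R M : Type*} [Semiring R] [AddCommMonoid M] [Module R M]
    (F : ℕ → Submodule R M) (n : ℕ) : (0 : M) ∈ lowerFil F n := by
  cases n with
  | zero => exact Submodule.zero_mem ⊥
  | succ m => exact (F m).zero_mem

lemma fil_deg_uniq {R M : Type*} [Semiring R] [AddCommMonoid M] [Module R M]
    {F : ℕ → Submodule R M} (hF : Monotone F) {a : M} {n n' : ℕ}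
    (h1 : a ∈ F n) (h2 : a ∉ lowerFil F n) (h3 : a ∈ F n') (h4 : a ∉ lowerFil F n') :
    n = n' := by
  rcases lt_trichotomy n n' with h | h | h
  · obtain ⟨m, rfl⟩ : ∃ m, n' = m + 1 := ⟨n' - 1, by omega⟩
    exact absurd (hF (by omega : n ≤ m) h1) h4
  · exact h
  · obtain ⟨m, rfl⟩ : ∃ m, n = m + 1 := ⟨n - 1, by omega⟩
    exact absurd (hF (by omega : n' ≤ m) h3) h2

lemma fil_exists_min {R M : Type*} [Semiring R] [AddCommMonoid M] [Module R M]
    (F : ℕ → Submodule R M) {a : M} (ha : a ≠ 0) (hex : ∃ n, a ∈ F n) :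
    ∃ n, a ∈ F n ∧ a ∉ lowerFil F n ∧ ∀ m, a ∈ F m → n ≤ m := by
  classical
  refine ⟨Nat.find hex, Nat.find_spec hex, ?_, fun m hm => Nat.find_min' hex hm⟩
  cases hn : Nat.find hex with
  | zero => simp [lowerFil, Submodule.mem_bot, ha]
  | succ m =>
    intro h
    have hle : Nat.find hex ≤ m := Nat.find_min' hex h
    omega

/-- Let `A = ∪ Λᵢ` be a filtered `k`-algebra such that `A` and `gr A` are both Ore
domains (the conditions on `gr A` are expressed via homogeneous elements:
`a ∈ Λ u`, `a ∉ lowerFil Λ u` means the class of `a` in `gr A` is a nonzero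
homogeneous element of degree `u`).  Let `M = ∪ Θᵢ` be a filtered right ideal of `A`
such that either each `Θᵢ` is finite-dimensional over `k`, or `gr_Θ M` is a finitely
generated `gr A`-module.  If `(gr_Θ M)_{≥ r₀}` is a torsion-free right `gr A`-module
for some `r₀`, then there exists `j ∈ ℤ` such that `Θᵢ = Λ_{i+j} ∩ M` for all
sufficiently large `i`. -/
theorem canonical_filtration
    {k A : Type*} [Field k] [Ring A] [Algebra k A] [IsDomain A]
    (Λ : ℕ → Submodule k A)
    (hΛmono : Monotone Λ)
    (hΛexh : ∀ a : A, ∃ i, a ∈ Λ i)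
    (hΛone : (1 : A) ∈ Λ 0)
    (hΛmul : ∀ i j : ℕ, ∀ a ∈ Λ i, ∀ b ∈ Λ j, a * b ∈ Λ (i + j))
    -- `A` is a (right) Ore domain
    (hAore : ∀ a b : A, a ≠ 0 → b ≠ 0 → ∃ x y : A, a * x = b * y ∧ a * x ≠ 0)
    -- `gr A` is a domain: the product of nonzero homogeneous elements of degrees
    -- `u` and `v` is a nonzero homogeneous element of degree `u + v`
    (hgrdom : ∀ (u v : ℕ) (a b : A),
      a ∈ Λ u → a ∉ lowerFil Λ u → b ∈ Λ v → b ∉ lowerFil Λ v →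
        a * b ∉ lowerFil Λ (u + v))
    -- `gr A` is (right) Ore on homogeneous elements
    (hgrore : ∀ (u v : ℕ) (a b : A),
      a ∈ Λ u → a ∉ lowerFil Λ u → b ∈ Λ v → b ∉ lowerFil Λ v →
        ∃ (s t : ℕ) (x y : A), x ∈ Λ s ∧ y ∈ Λ t ∧ u + s = v + t ∧
          a * x - b * y ∈ lowerFil Λ (u + s) ∧ a * x ∉ lowerFil Λ (u + s))
    -- `M` is a right ideal of `A`
    (M : Submodule k A)
    (hMideal : ∀ m ∈ M, ∀ a : A, m * a ∈ M)
    -- `Θ` is a filtration of `M`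
    (Θ : ℕ → Submodule k A)
    (hΘM : ∀ i, Θ i ≤ M)
    (hΘmono : Monotone Θ)
    (hΘexh : ∀ m ∈ M, ∃ i, m ∈ Θ i)
    (hΘmul : ∀ i j : ℕ, ∀ m ∈ Θ i, ∀ a ∈ Λ j, m * a ∈ Θ (i + j))
    -- finiteness: each `Θᵢ` is finite-dimensional over `k`, or
    -- `gr_Θ M` is generated over `gr A` by homogeneous elements `mgen j` of
    -- degrees `dg j`
    (hfin : (∀ i, FiniteDimensional k (Θ i)) ∨
      (∃ (s : ℕ) (mgen : Fin s → A) (dg : Fin s → ℕ),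
        (∀ j, mgen j ∈ Θ (dg j)) ∧
        ∀ (i : ℕ), ∀ x ∈ Θ i, ∃ a : Fin s → A,
          (∀ j, a j ∈ Λ (i - dg j) ∧ mgen j * a j ∈ Θ i) ∧
          x - (∑ j, mgen j * a j) ∈ lowerFil Θ i))
    -- `(gr_Θ M)_{≥ r₀}` is torsion-free over `gr A`
    (r₀ : ℕ)
    (htf : ∀ r : ℕ, r₀ ≤ r → ∀ m ∈ Θ r, m ∉ lowerFil Θ r →
      ∀ (t : ℕ), ∀ a ∈ Λ t, a ∉ lowerFil Λ t →
        m * a ∉ lowerFil Θ (r + t)) :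
    ∃ (j : ℤ) (N : ℕ), ∀ i : ℕ, N ≤ i →
      0 ≤ (i : ℤ) + j ∧ Θ i = Λ ((i : ℤ) + j).toNat ⊓ M := by
  classical
  -- Step 1: Θ r₀ is contained in some Λ c
  obtain ⟨c, hc⟩ : ∃ c, Θ r₀ ≤ Λ c := by
    rcases hfin with hfd | ⟨s, mgen, dg, hgen1, hgen2⟩
    · obtain ⟨t, ht⟩ := (Submodule.fg_iff_finiteDimensional _).mpr (hfd r₀)
      choose f hf using hΛexh
      refine ⟨t.sup f, ?_⟩
      rw [← ht]
      apply Submodule.span_le.mpr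
      intro x hx
      exact hΛmono (Finset.le_sup hx) (hf x)
    · choose D hD using fun j => hΛexh (mgen j)
      set c := Finset.univ.sup D with hcdef
      have key : ∀ i, Θ i ≤ Λ (c + i) := by
        intro i
        induction i using Nat.strong_induction_on with
        | _ i ih =>
          intro x hx
          obtain ⟨a, ha1, ha2⟩ := hgen2 i x hx
          have hsum : (∑ j, mgen j * a j) ∈ Λ (c + i) := by
            apply Submodule.sum_mem
            intro j _
            have hDc : D j ≤ c := Finset.le_sup (Finset.mem_univ j)
            have := hΛmul (D j) (i - dg j) _ (hD j) _ ((ha1 j).1)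
            exact hΛmono (by omega : D j + (i - dg j) ≤ c + i) this
          have hrest : x - (∑ j, mgen j * a j) ∈ Λ (c + i) := by
            cases i with
            | zero =>
              have hz : x - (∑ j, mgen j * a j) = 0 := by
                simpa [lowerFil, Submodule.mem_bot] using ha2
              rw [hz]; exact zero_mem _
            | succ m =>
              have hm : x - (∑ j, mgen j * a j) ∈ Θ m := ha2
              exact hΛmono (by omega) (ih m (by omega) hm)
          have := Submodule.add_mem _ hrest hsum
          simpa using this
      exact ⟨c + r₀, key r₀⟩
  have hnz : ∀ (F : ℕ → Submodule k A) (n : ℕ) (a : A), a ∉ lowerFil F n → a ≠ 0 := by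
    intro F n a h
    rintro rfl
    exact h (zero_mem_lowerFil F n)
  by_cases hM : ∃ p, r₀ ≤ p ∧ ∃ m ∈ Θ p, m ∉ lowerFil Θ p
  · -- main case
    obtain ⟨v₀, hv₀, m₀, hm₀Θ, hm₀l⟩ := hM
    have hm₀ne : m₀ ≠ 0 := hnz _ _ _ hm₀l
    obtain ⟨d₀, hm₀Λ, hm₀Λl, -⟩ := fil_exists_min Λ hm₀ne (hΛexh m₀)
    set j : ℤ := (d₀ : ℤ) - (v₀ : ℤ) with hj
    have econst : ∀ m, ∀ p q : ℕ, r₀ ≤ p → m ∈ Θ p → m ∉ lowerFil Θ p →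
        m ∈ Λ q → m ∉ lowerFil Λ q → (q : ℤ) - (p : ℤ) = j := by
      intro m p q hrp hmp hmpl hmq hmql
      have hmne : m ≠ 0 := hnz _ _ _ hmpl
      obtain ⟨x, y, hxy, hne⟩ := hAore m m₀ hmne hm₀ne
      have hxne : x ≠ 0 := by rintro rfl; simp at hne
      have hyne : y ≠ 0 := by rintro rfl; rw [hxy] at hne; simp at hne
      obtain ⟨sx, hx1, hx2, -⟩ := fil_exists_min Λ hxne (hΛexh x)
      obtain ⟨ty, hy1, hy2, -⟩ := fil_exists_min Λ hyne (hΛexh y)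
      have h1 : m * x ∈ Θ (p + sx) := hΘmul p sx m hmp x hx1
      have h2 : m * x ∉ lowerFil Θ (p + sx) := htf p hrp m hmp hmpl sx x hx1 hx2
      have h3 : m * x ∈ Λ (q + sx) := hΛmul q sx m hmq x hx1
      have h4 : m * x ∉ lowerFil Λ (q + sx) := hgrdom q sx m x hmq hmql hx1 hx2
      have h5 : m₀ * y ∈ Θ (v₀ + ty) := hΘmul _ _ _ hm₀Θ _ hy1
      have h6 : m₀ * y ∉ lowerFil Θ (v₀ + ty) := htf v₀ hv₀ m₀ hm₀Θ hm₀l ty y hy1 hy2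
      have h7 : m₀ * y ∈ Λ (d₀ + ty) := hΛmul _ _ _ hm₀Λ _ hy1
      have h8 : m₀ * y ∉ lowerFil Λ (d₀ + ty) := hgrdom _ _ _ _ hm₀Λ hm₀Λl hy1 hy2
      rw [hxy] at h1 h2 h3 h4
      have e1 : v₀ + ty = p + sx := fil_deg_uniq hΘmono h5 h6 h1 h2
      have e2 : d₀ + ty = q + sx := fil_deg_uniq hΛmono h7 h8 h3 h4
      rw [hj]; omega
    refine ⟨j, r₀ + c + j.natAbs, ?_⟩
    intro i hi
    have hij : 0 ≤ (i : ℤ) + j := by omega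
    have hn : ((((i : ℤ) + j).toNat : ℤ)) = (i : ℤ) + j := Int.toNat_of_nonneg hij
    set n := ((i : ℤ) + j).toNat with hni
    refine ⟨hij, le_antisymm ?_ ?_⟩
    · intro m hm
      refine Submodule.mem_inf.mpr ⟨?_, hΘM i hm⟩
      by_cases hmz : m = 0
      · subst hmz; exact zero_mem _
      obtain ⟨p, hp1, hp2, hp3⟩ := fil_exists_min Θ hmz (hΘexh m (hΘM i hm))
      have hpi : p ≤ i := hp3 i hm
      by_cases hrp : r₀ ≤ p
      · obtain ⟨q, hq1, hq2, -⟩ := fil_exists_min Λ hmz (hΛexh m)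
        have heq := econst m p q hrp hp1 hp2 hq1 hq2
        have hqn : q ≤ n := by omega
        exact hΛmono hqn hq1
      · have hmr : m ∈ Θ r₀ := hΘmono (by omega) hp1
        have hcn : c ≤ n := by omega
        exact hΛmono hcn (hc hmr)
    · intro m hm
      obtain ⟨hmΛ, hmM⟩ := Submodule.mem_inf.mp hm
      by_cases hmz : m = 0
      · subst hmz; exact zero_mem _
      obtain ⟨p, hp1, hp2, hp3⟩ := fil_exists_min Θ hmz (hΘexh m hmM)
      by_cases hpi : p ≤ i
      · exact hΘmono hpi hp1
      · push_neg at hpi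
        have hrp : r₀ ≤ p := by omega
        obtain ⟨q, hq1, hq2, hq3⟩ := fil_exists_min Λ hmz (hΛexh m)
        have heq := econst m p q hrp hp1 hp2 hq1 hq2
        have hqn : q ≤ n := hq3 n hmΛ
        exfalso; omega
  · -- degenerate case: the filtration stabilizes
    push_neg at hM
    have hstab : ∀ t, Θ (r₀ + t) ≤ Θ r₀ := by
      intro t
      induction t with
      | zero => exact le_refl _
      | succ u ih =>
        intro m hm
        have hlow : m ∈ lowerFil Θ (r₀ + u + 1) := hM (r₀ + u + 1) (by omega) m hm
        exact ih hlow
    have hMle : M ≤ Θ r₀ := by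
      intro m hm
      obtain ⟨i, hi⟩ := hΘexh m hm
      rcases le_total i r₀ with h | h
      · exact hΘmono h hi
      · refine hstab (i - r₀) ?_
        rwa [Nat.add_sub_cancel' h]
    refine ⟨0, max r₀ c, ?_⟩
    intro i hi
    refine ⟨by omega, ?_⟩
    have hn : (((i : ℤ) + 0).toNat) = i := by omega
    rw [hn]
    apply le_antisymm
    · intro m hm
      refine Submodule.mem_inf.mpr ⟨?_, hΘM i hm⟩
      exact hΛmono (le_trans (le_max_right _ _) hi) (hc (hMle (hΘM i hm)))
    · intro m hm
      obtain ⟨hmΛ, hmM⟩ := Submodule.mem_inf.mp hm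
      exact hΘmono (le_trans (le_max_left _ _) hi) (hMle hmM)
end
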